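/- Let n ≥ 1, 0 < ε < 1, and 0 < β ≤ α be real numbers. Suppose S_1, S_2, …, S_s are symmetric positive semidefinite n×n real matrices such that (i) S_1 ⪰ S_2 ⪰ … ⪰ S_s in the Loewner order, (ii) every eigenvalue of every S_i is either 0 or lies in the interval [β, α], and (iii) for every 1 ≤ i ≤ s−2 it is NOT the case that (1−ε)·S_i ⪯ S_{i+2}. Then s ≤ 2 + (4n/ε)·ln(2α/β); in particular s = O((n/ε)·log(α/β)). -/

import Mathlib

open Matrix


lemma dot_symm {n : ℕ} {M : Matrix (Fin n) (Fin n) ℝ} (hM : M.IsHermitian)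
    (a b : Fin n → ℝ) : a ⬝ᵥ (M *ᵥ b) = (M *ᵥ a) ⬝ᵥ b := by
  rw [dotProduct_mulVec, ← mulVec_transpose, ← conjTranspose_eq_transpose_of_trivial, hM.eq]

lemma dot_conj {n : ℕ} (A U : Matrix (Fin n) (Fin n) ℝ) (y : Fin n → ℝ) :
    y ⬝ᵥ ((U * A * star U) *ᵥ y) = (star U *ᵥ y) ⬝ᵥ (A *ᵥ (star U *ᵥ y)) := by
  rw [star_eq_conjTranspose, conjTranspose_eq_transpose_of_trivial,
    ← mulVec_mulVec, ← mulVec_mulVec, dotProduct_mulVec (v := y),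
    ← mulVec_transpose, mulVec_transpose]

-- prod of [0,1] values is ≤ each
lemma prod_le_single {n : ℕ} (μ : Fin n → ℝ) (h0 : ∀ i, 0 ≤ μ i) (h1 : ∀ i, μ i ≤ 1)
    (i : Fin n) : ∏ j, μ j ≤ μ i := by
  rw [← Finset.mul_prod_erase Finset.univ μ (Finset.mem_univ i)]
  calc μ i * ∏ j ∈ Finset.univ.erase i, μ j ≤ μ i * 1 := by
        refine mul_le_mul_of_nonneg_left (Finset.prod_le_one (fun j _ => h0 j) (fun j _ => h1 j)) (h0 i)
    _ = μ i := mul_one _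

set_option maxHeartbeats 1000000 in
/-- Key Rayleigh bound: if `0 ⪯ M ⪯ 1` then `det M * ‖y‖² ≤ yᵀMy`. -/
lemma det_mul_dot_le {n : ℕ} {M : Matrix (Fin n) (Fin n) ℝ}
    (hM : M.PosSemidef) (hM1 : ((1 : Matrix (Fin n) (Fin n) ℝ) - M).PosSemidef)
    (y : Fin n → ℝ) : M.det * (y ⬝ᵥ y) ≤ y ⬝ᵥ (M *ᵥ y) := by
  have hH := hM.1
  set U : Matrix (Fin n) (Fin n) ℝ := (hH.eigenvectorUnitary : Matrix (Fin n) (Fin n) ℝ) with hUdef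
  set μ : Fin n → ℝ := hH.eigenvalues with hμdef
  have hUsU : star U * U = 1 := mem_unitaryGroup_iff'.mp (hH.eigenvectorUnitary).2
  have hUUs : U * star U = 1 := mem_unitaryGroup_iff.mp (hH.eigenvectorUnitary).2
  have hspec : M = U * diagonal μ * star U := by
    have := hH.spectral_theorem
    simpa [RCLike.ofReal_real_eq_id, Function.comp] using this
  have hμ0 : ∀ i, 0 ≤ μ i := hM.eigenvalues_nonneg
  have hμ1 : ∀ i, μ i ≤ 1 := by
    intro i
    have hc := hM1.conjTranspose_mul_mul_same (U : Matrix (Fin n) (Fin n) ℝ)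
    rw [← star_eq_conjTranspose] at hc
    have he : star (U : Matrix (Fin n) (Fin n) ℝ) * (1 - M) * U
        = diagonal (fun i => 1 - μ i) := by
      rw [mul_sub, sub_mul, mul_one]
      have h2 : star (U : Matrix (Fin n) (Fin n) ℝ) * M * U = diagonal μ := by
        have := hH.conjStarAlgAut_star_eigenvectorUnitary
        simpa [RCLike.ofReal_real_eq_id, Function.comp] using this
      rw [hUsU, h2]
      ext a b
      by_cases hab : a = b <;> simp [diagonal, hab]
    rw [he] at hc
    have := (posSemidef_diagonal_iff.mp hc) i
    linarith
  have hdet : M.det = ∏ i, μ i := by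
    have := hH.det_eq_prod_eigenvalues
    simpa using this
  set z : Fin n → ℝ := star U *ᵥ y with hz
  have hyy : y ⬝ᵥ y = z ⬝ᵥ z := by
    have := dot_conj (1 : Matrix (Fin n) (Fin n) ℝ) U y
    rw [mul_one, hUUs] at this
    simpa using this
  have hyMy : y ⬝ᵥ (M *ᵥ y) = z ⬝ᵥ (diagonal μ *ᵥ z) := by
    rw [hspec]; exact dot_conj _ _ y
  rw [hyy, hyMy, hdet]
  simp only [dotProduct, mulVec_diagonal]
  rw [Finset.mul_sum]
  refine Finset.sum_le_sum fun i _ => ?_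
  have h1 : ∏ j, μ j ≤ μ i := prod_le_single μ hμ0 hμ1 i
  nlinarith [sq_nonneg (z i), mul_self_nonneg (z i)]

/-- `det (S + β•1) = ∏ (λᵢ + β)` for a Hermitian real matrix. -/
lemma det_add_smul_one {n : ℕ} (β : ℝ) {S : Matrix (Fin n) (Fin n) ℝ} (hH : S.IsHermitian) :
    (S + β • 1).det = ∏ j, (hH.eigenvalues j + β) := by
  set U : Matrix (Fin n) (Fin n) ℝ := (hH.eigenvectorUnitary : Matrix (Fin n) (Fin n) ℝ) with hUdef
  have hUsU : star U * U = 1 := mem_unitaryGroup_iff'.mp (hH.eigenvectorUnitary).2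
  have hUUs : U * star U = 1 := mem_unitaryGroup_iff.mp (hH.eigenvectorUnitary).2
  have hS' : star U * S * U = diagonal hH.eigenvalues := by
    simpa [RCLike.ofReal_real_eq_id, Function.comp] using hH.conjStarAlgAut_star_eigenvectorUnitary
  have hβ1 : β • (1 : Matrix (Fin n) (Fin n) ℝ) = diagonal (fun _ => β) := by
    ext i j
    by_cases hij : i = j <;> simp [hij, Matrix.one_apply, diagonal]
  have hA' : star U * (S + β • 1) * U = diagonal (fun j => hH.eigenvalues j + β) := by
    rw [mul_add, add_mul, hS', Matrix.mul_smul, Matrix.smul_mul, mul_one, hUsU, hβ1,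
      diagonal_add]
  have e1 : (star U).det * U.det = 1 := by rw [← det_mul, hUsU, det_one]
  have e2 := congrArg Matrix.det hA'
  rw [det_mul, det_mul, det_diagonal] at e2
  linear_combination e2 - (S + β • 1).det * e1

set_option maxHeartbeats 1000000 in
lemma step_det {n : ℕ} {ε β : ℝ} (hε0 : 0 < ε) (hε1 : ε < 1) (hβ0 : 0 < β)
    {S T : Matrix (Fin n) (Fin n) ℝ} (hS : S.PosSemidef) (hT : T.PosSemidef)
    (hST : (S - T).PosSemidef)
    (heig : ∀ j, hS.1.eigenvalues j = 0 ∨ β ≤ hS.1.eigenvalues j)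
    (hsep : ¬ (T - (1 - ε) • S).PosSemidef) :
    (T + β • 1).det ≤ (1 - ε / 2) * (S + β • 1).det := by
  have hH := hS.1
  set U : Matrix (Fin n) (Fin n) ℝ := (hH.eigenvectorUnitary : Matrix (Fin n) (Fin n) ℝ) with hUdef
  set lam : Fin n → ℝ := hH.eigenvalues with hlamdef
  have hUsU : star U * U = 1 := mem_unitaryGroup_iff'.mp (hH.eigenvectorUnitary).2
  have hUUs : U * star U = 1 := mem_unitaryGroup_iff.mp (hH.eigenvectorUnitary).2
  have hS' : star U * S * U = diagonal lam := by
    simpa [RCLike.ofReal_real_eq_id, Function.comp] using hH.conjStarAlgAut_star_eigenvectorUnitary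
  set T' : Matrix (Fin n) (Fin n) ℝ := star U * T * U with hT'def
  have hT'psd : T'.PosSemidef := by
    have := hT.conjTranspose_mul_mul_same U
    rwa [← star_eq_conjTranspose] at this
  have hDT : (diagonal lam - T').PosSemidef := by
    have := hST.conjTranspose_mul_mul_same U
    rw [← star_eq_conjTranspose] at this
    rwa [mul_sub, sub_mul, hS'] at this
  have key : ∀ X : Matrix (Fin n) (Fin n) ℝ, U * (star U * X * U) * star U = X := by
    intro X
    calc U * (star U * X * U) * star U = (U * star U) * X * (U * star U) := by
          simp only [Matrix.mul_assoc]
      _ = X := by rw [hUUs, one_mul, mul_one]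
  have hsep' : ¬ (T' - (1 - ε) • diagonal lam).PosSemidef := by
    intro hc
    apply hsep
    have hcc := hc.conjTranspose_mul_mul_same (star U)
    rw [← star_eq_conjTranspose, star_star] at hcc
    have he : U * (T' - (1 - ε) • diagonal lam) * star U = T - (1 - ε) • S := by
      rw [hT'def, ← hS', mul_sub, sub_mul, Matrix.mul_smul, Matrix.smul_mul, key, key]
    rwa [he] at hcc
  have hHerm : (T' - (1 - ε) • diagonal lam).IsHermitian := by
    have h1 : ((1 - ε) • diagonal lam).IsHermitian := by
      unfold Matrix.IsHermitian
      rw [conjTranspose_smul, (isHermitian_diagonal lam).eq]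
      simp
    exact hT'psd.1.sub h1
  obtain ⟨w, hw⟩ : ∃ w, w ⬝ᵥ ((T' - (1 - ε) • diagonal lam) *ᵥ w) < 0 := by
    by_contra hc
    push_neg at hc
    exact hsep' (PosSemidef.of_dotProduct_mulVec_nonneg hHerm fun x => by simpa using hc x)
  have hw2 : w ⬝ᵥ (T' *ᵥ w) < (1 - ε) * (w ⬝ᵥ (diagonal lam *ᵥ w)) := by
    rw [sub_mulVec, dotProduct_sub, smul_mulVec, dotProduct_smul] at hw
    simp only [smul_eq_mul] at hw
    linarith
  classical
  set x : Fin n → ℝ := fun j => if lam j = 0 then 0 else w j with hxdef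
  set d : Fin n → ℝ := w - x with hddef
  have hSd : diagonal lam *ᵥ d = 0 := by
    funext j
    by_cases hj : lam j = 0 <;>
      simp [mulVec_diagonal, hddef, hxdef, hj, Pi.sub_apply]
  have hTd : T' *ᵥ d = 0 := by
    have h1 : 0 ≤ d ⬝ᵥ (T' *ᵥ d) := by simpa using hT'psd.dotProduct_mulVec_nonneg d
    have h2 : 0 ≤ d ⬝ᵥ ((diagonal lam - T') *ᵥ d) := by simpa using hDT.dotProduct_mulVec_nonneg d
    rw [sub_mulVec, dotProduct_sub, hSd, dotProduct_zero] at h2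
    have h3 : d ⬝ᵥ (T' *ᵥ d) = 0 := le_antisymm (by linarith) h1
    exact (hT'psd.dotProduct_mulVec_zero_iff d).mp (by simpa using h3)
  have hwSx : w ⬝ᵥ (diagonal lam *ᵥ w) = x ⬝ᵥ (diagonal lam *ᵥ x) := by
    simp only [dotProduct, mulVec_diagonal]
    refine Finset.sum_congr rfl fun j _ => ?_
    by_cases hj : lam j = 0 <;> simp [hxdef, hj]
  have hwTx : w ⬝ᵥ (T' *ᵥ w) = x ⬝ᵥ (T' *ᵥ x) := by
    have hw' : w = x + d := by rw [hddef]; ring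
    rw [hw', show T' *ᵥ (x + d) = T' *ᵥ x from by rw [mulVec_add, hTd, add_zero],
      add_dotProduct, dot_symm hT'psd.1 d x, hTd, zero_dotProduct, add_zero]
  set q : ℝ := x ⬝ᵥ (diagonal lam *ᵥ x) with hqdef
  set p : ℝ := x ⬝ᵥ (T' *ᵥ x) with hpdef
  set r : ℝ := β * (x ⬝ᵥ x) with hrdef
  have hp0 : 0 ≤ p := by simpa using hT'psd.dotProduct_mulVec_nonneg x
  have hpq : p < (1 - ε) * q := by rw [← hwTx, ← hwSx]; exact hw2
  have hq0 : 0 < q := by nlinarith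
  have hxx0 : 0 ≤ x ⬝ᵥ x := Finset.sum_nonneg fun j _ => mul_self_nonneg _
  have hr0 : 0 ≤ r := mul_nonneg hβ0.le hxx0
  have hrq : r ≤ q := by
    rw [hrdef, hqdef]
    simp only [dotProduct, mulVec_diagonal, Finset.mul_sum]
    refine Finset.sum_le_sum fun j _ => ?_
    by_cases hj : lam j = 0
    · simp [hxdef, hj]
    · rcases heig j with h | h
      · exact absurd h hj
      · nlinarith [mul_self_nonneg (x j)]
  -- the conjugated matrices
  set lamb : Fin n → ℝ := fun j => lam j + β with hlambdef
  have hlamb0 : ∀ j, 0 < lamb j := fun j =>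
    add_pos_of_nonneg_of_pos (hS.eigenvalues_nonneg j) hβ0
  set sq : Fin n → ℝ := fun j => Real.sqrt (lamb j) with hsqdef
  have hsq0 : ∀ j, 0 < sq j := fun j => Real.sqrt_pos.mpr (hlamb0 j)
  set D : Matrix (Fin n) (Fin n) ℝ := diagonal sq with hDdef
  set E : Matrix (Fin n) (Fin n) ℝ := diagonal (fun j => (sq j)⁻¹) with hEdef
  have hDE : D * E = 1 := by
    rw [hDdef, hEdef, diagonal_mul_diagonal]
    have : (fun i => sq i * (sq i)⁻¹) = fun _ => (1 : ℝ) :=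
      funext fun i => mul_inv_cancel₀ (hsq0 i).ne'
    rw [this, diagonal_one]
  have hED : E * D = 1 := by
    rw [hDdef, hEdef, diagonal_mul_diagonal]
    have : (fun i => (sq i)⁻¹ * sq i) = fun _ => (1 : ℝ) :=
      funext fun i => inv_mul_cancel₀ (hsq0 i).ne'
    rw [this, diagonal_one]
  have hDD : D * D = diagonal lamb := by
    have h : (fun i => sq i * sq i) = lamb := funext fun i => Real.mul_self_sqrt (hlamb0 i).le
    rw [hDdef, diagonal_mul_diagonal, h]
  have hβ1 : β • (1 : Matrix (Fin n) (Fin n) ℝ) = diagonal (fun _ => β) := by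
    ext i j
    by_cases hij : i = j <;> simp [hij, Matrix.one_apply, diagonal]
  set B' : Matrix (Fin n) (Fin n) ℝ := T' + diagonal (fun _ => β) with hB'def
  have hB'eq : star U * (T + β • 1) * U = B' := by
    rw [mul_add, add_mul, Matrix.mul_smul, Matrix.smul_mul, mul_one, hUsU, hβ1]
  have hlambsplit : diagonal lamb = diagonal lam + diagonal (fun _ => β) := by
    rw [← diagonal_add]
  have e1 : (star U).det * U.det = 1 := by rw [← det_mul, hUsU, det_one]
  have hdetT : (T + β • 1).det = B'.det := by
    have e2 := congrArg Matrix.det hB'eq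
    rw [det_mul, det_mul] at e2
    linear_combination e2 - (T + β • 1).det * e1
  have hdetS : (S + β • 1).det = (diagonal lamb).det := by
    rw [det_add_smul_one β hH, det_diagonal]
  have hdiagpos : 0 < (diagonal lamb).det := by
    rw [det_diagonal]; exact Finset.prod_pos fun j _ => hlamb0 j
  have hB'psd : B'.PosSemidef :=
    hT'psd.add (PosSemidef.diagonal fun j => hβ0.le)
  have hEherm : Eᴴ = E := by
    rw [hEdef, diagonal_conjTranspose]
    congr 1
  set M : Matrix (Fin n) (Fin n) ℝ := E * B' * E with hMdef
  have hMpsd : M.PosSemidef := by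
    have := hB'psd.mul_mul_conjTranspose_same E
    rwa [hEherm] at this
  have hEdlE : E * diagonal lamb * E = 1 := by
    rw [← hDD, ← Matrix.mul_assoc E D D, Matrix.mul_assoc (E * D) D E, hED, hDE, one_mul]
  have h1M : ((1 : Matrix (Fin n) (Fin n) ℝ) - M).PosSemidef := by
    have hpsd : (diagonal lamb - B').PosSemidef := by
      have : diagonal lamb - B' = diagonal lam - T' := by
        rw [hlambsplit, hB'def]; abel
      rw [this]; exact hDT
    have := hpsd.mul_mul_conjTranspose_same E
    rw [hEherm] at this
    rwa [mul_sub, sub_mul, hEdlE] at this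
  have hDMD : D * M * D = B' := by
    rw [hMdef]
    simp only [← Matrix.mul_assoc]
    rw [hDE, one_mul, Matrix.mul_assoc, hED, mul_one]
  have hdetM : B'.det = (diagonal lamb).det * M.det := by
    have e2 := congrArg Matrix.det hDMD
    rw [det_mul, det_mul] at e2
    have e3 : D.det * D.det = (diagonal lamb).det := by rw [← det_mul, hDD]
    linear_combination - e2 + M.det * e3
  set y : Fin n → ℝ := D *ᵥ x with hydef
  have hkey := det_mul_dot_le hMpsd h1M y
  have hdiagβ : x ⬝ᵥ (diagonal (fun _ => β) *ᵥ x) = r := by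
    rw [hrdef]
    simp only [dotProduct, mulVec_diagonal, Finset.mul_sum]
    exact Finset.sum_congr rfl fun j _ => by ring
  have hDherm : D.IsHermitian := by rw [hDdef]; exact isHermitian_diagonal sq
  have hyy : y ⬝ᵥ y = q + r := by
    rw [hydef, hqdef, hrdef]
    simp only [dotProduct, hDdef, mulVec_diagonal, Finset.mul_sum]
    rw [← Finset.sum_add_distrib]
    refine Finset.sum_congr rfl fun j _ => ?_
    have h : sq j * sq j = lam j + β := Real.mul_self_sqrt (hlamb0 j).le
    linear_combination (x j * x j) * h
  have hyMy : y ⬝ᵥ (M *ᵥ y) = p + r := by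
    rw [hydef, ← dot_symm hDherm x (M *ᵥ (D *ᵥ x)), mulVec_mulVec, mulVec_mulVec, hDMD,
      hB'def, add_mulVec, dotProduct_add, hdiagβ, ← hpdef]
  rw [hyy, hyMy] at hkey
  have h3 : (1 - ε) * q + r ≤ (1 - ε / 2) * (q + r) := by nlinarith
  have hM2 : M.det * (q + r) ≤ (1 - ε / 2) * (q + r) := by nlinarith
  have hqr0 : (0 : ℝ) < q + r := by linarith
  have hM3 : M.det ≤ 1 - ε / 2 := le_of_mul_le_mul_right hM2 hqr0
  rw [hdetT, hdetM, hdetS]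
  calc (diagonal lamb).det * M.det ≤ (diagonal lamb).det * (1 - ε / 2) :=
        mul_le_mul_of_nonneg_left hM3 hdiagpos.le
    _ = (1 - ε / 2) * (diagonal lamb).det := mul_comm _ _

lemma det_lb {n : ℕ} {β : ℝ} (hβ0 : 0 < β) {S : Matrix (Fin n) (Fin n) ℝ}
    (hS : S.PosSemidef) : β ^ n ≤ (S + β • 1).det := by
  rw [det_add_smul_one β hS.1]
  calc β ^ n = ∏ _j : Fin n, β := by rw [Finset.prod_const, Finset.card_univ, Fintype.card_fin]
    _ ≤ ∏ j, (hS.1.eigenvalues j + β) :=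
        Finset.prod_le_prod (fun j _ => hβ0.le)
          (fun j _ => le_add_of_nonneg_left (hS.eigenvalues_nonneg j))

lemma det_ub {n : ℕ} {β α : ℝ} (hβ0 : 0 < β) (hβα : β ≤ α) {S : Matrix (Fin n) (Fin n) ℝ}
    (hS : S.PosSemidef) (heig : ∀ j, hS.1.eigenvalues j = 0 ∨ hS.1.eigenvalues j ≤ α) :
    (S + β • 1).det ≤ (2 * α) ^ n := by
  rw [det_add_smul_one β hS.1]
  calc ∏ j, (hS.1.eigenvalues j + β) ≤ ∏ _j : Fin n, (2 * α) := by
        refine Finset.prod_le_prod (fun j _ => add_nonneg (hS.eigenvalues_nonneg j) hβ0.le)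
          (fun j _ => ?_)
        rcases heig j with h | h
        · rw [h]; linarith
        · linarith
    _ = (2 * α) ^ n := by rw [Finset.prod_const, Finset.card_univ, Fintype.card_fin]

/-- **Spectrogram size bound.**
If `S 0 ⪰ S 1 ⪰ … ⪰ S (s-1)` are PSD `n × n` matrices whose nonzero eigenvalues all lie
in `[β, α]`, and for every `i ≤ s - 3` it is *not* the case that `(1-ε) • S i ⪯ S (i+2)`,
then `s ≤ 2 + (4n/ε) · ln(2α/β)`. -/
theorem spectrogram_size_bound (n s : ℕ) (hn : 1 ≤ n) (ε α β : ℝ)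
    (hε0 : 0 < ε) (hε1 : ε < 1) (hβ0 : 0 < β) (hβα : β ≤ α)
    (S : Fin s → Matrix (Fin n) (Fin n) ℝ)
    (hPSD : ∀ i, (S i).PosSemidef)
    (hchain : ∀ (i : Fin s) (h : (i : ℕ) + 1 < s),
      (S i - S ⟨(i : ℕ) + 1, h⟩).PosSemidef)
    (heig : ∀ (i : Fin s) (j : Fin n),
      (hPSD i).1.eigenvalues j = 0 ∨ (hPSD i).1.eigenvalues j ∈ Set.Icc β α)
    (hsep : ∀ (i : Fin s) (h : (i : ℕ) + 2 < s),
      ¬ (S ⟨(i : ℕ) + 2, h⟩ - (1 - ε) • S i).PosSemidef) :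
    (s : ℝ) ≤ 2 + (4 * n / ε) * Real.log (2 * α / β) := by
  have hα0 : 0 < α := lt_of_lt_of_le hβ0 hβα
  have hL0 : 0 ≤ Real.log (2 * α / β) := Real.log_nonneg (by rw [le_div_iff₀ hβ0]; linarith)
  by_cases hs2 : s ≤ 2
  · have h1 : (s : ℝ) ≤ 2 := by exact_mod_cast hs2
    have h2 : 0 ≤ 4 * (n : ℝ) / ε * Real.log (2 * α / β) :=
      mul_nonneg (by positivity) hL0
    linarith
  push_neg at hs2
  have h0s : 0 < s := by omega
  set Φ : Fin s → ℝ := fun i => Real.log ((S i + β • 1).det) with hΦ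
  have hlb : ∀ i : Fin s, β ^ n ≤ (S i + β • 1).det := fun i => det_lb hβ0 (hPSD i)
  have hub : ∀ i : Fin s, (S i + β • 1).det ≤ (2 * α) ^ n := fun i =>
    det_ub hβ0 hβα (hPSD i) (fun j => (heig i j).imp id (fun h => h.2))
  have hdpos : ∀ i : Fin s, 0 < (S i + β • 1).det := fun i =>
    lt_of_lt_of_le (pow_pos hβ0 n) (hlb i)
  have key : ∀ j (h : 2 * j < s), Φ ⟨2 * j, h⟩ + j * (ε / 2) ≤ Φ ⟨0, h0s⟩ := by
    intro j
    induction j with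
    | zero =>
      intro h
      simp only [Nat.cast_zero, zero_mul, add_zero]
      exact le_of_eq (by norm_num)
    | succ j ih =>
      intro h
      have h2 : 2 * j < s := by omega
      have h1 : 2 * j + 1 < s := by omega
      have h2' : 2 * j + 2 < s := by omega
      have hch1 := hchain ⟨2 * j, h2⟩ (by simpa using h1)
      have hch2 := hchain ⟨2 * j + 1, h1⟩ (by simpa using h2')
      have hST : (S ⟨2 * j, h2⟩ - S ⟨2 * j + 2, h2'⟩).PosSemidef := by
        have := hch1.add hch2
        rwa [sub_add_sub_cancel] at this
      have hsep' := hsep ⟨2 * j, h2⟩ (by simpa using h2')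
      have hdet := step_det hε0 hε1 hβ0 (hPSD ⟨2 * j, h2⟩) (hPSD ⟨2 * j + 2, h2'⟩) hST
        (fun jj => (heig ⟨2 * j, h2⟩ jj).imp id (fun hh => hh.1)) hsep'
      have hpos2 := hdpos ⟨2 * j, h2⟩
      have hpos1 := hdpos ⟨2 * j + 2, h2'⟩
      have hmul : (0 : ℝ) < 1 - ε / 2 := by linarith
      have hlogfac : Real.log (1 - ε / 2) ≤ -(ε / 2) := by
        have := Real.log_le_sub_one_of_pos hmul
        linarith
      have hlog : Φ ⟨2 * j + 2, h2'⟩ ≤ Φ ⟨2 * j, h2⟩ - ε / 2 := by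
        have c1 : Real.log ((S ⟨2 * j + 2, h2'⟩ + β • 1).det)
            ≤ Real.log ((1 - ε / 2) * (S ⟨2 * j, h2⟩ + β • 1).det) :=
          (Real.log_le_log_iff hpos1 (mul_pos hmul hpos2)).mpr hdet
        rw [Real.log_mul hmul.ne' hpos2.ne'] at c1
        simp only [hΦ]
        linarith
      have hfin : (⟨2 * (j + 1), h⟩ : Fin s) = ⟨2 * j + 2, h2'⟩ := by
        apply Fin.ext
        show 2 * (j + 1) = 2 * j + 2
        ring
      rw [hfin]
      have := ih h2
      push_cast
      push_cast at this
      linarith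
  set k := (s - 1) / 2 with hk
  have hks : 2 * k < s := by omega
  have hkey := key k hks
  have hΦ0 : Φ ⟨0, h0s⟩ ≤ n * Real.log (2 * α) := by
    calc Φ ⟨0, h0s⟩ ≤ Real.log ((2 * α) ^ n) :=
          (Real.log_le_log_iff (hdpos _) (pow_pos (by linarith) n)).mpr (hub _)
      _ = n * Real.log (2 * α) := Real.log_pow (2 * α) n
  have hΦk : (n : ℝ) * Real.log β ≤ Φ ⟨2 * k, hks⟩ := by
    calc (n : ℝ) * Real.log β = Real.log (β ^ n) := (Real.log_pow β n).symm
      _ ≤ Φ ⟨2 * k, hks⟩ := (Real.log_le_log_iff (pow_pos hβ0 n) (hdpos _)).mpr (hlb _)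
  have hlogdiv : Real.log (2 * α / β) = Real.log (2 * α) - Real.log β :=
    Real.log_div (by linarith) hβ0.ne'
  have hkb : (k : ℝ) * (ε / 2) ≤ n * Real.log (2 * α / β) := by
    have hr : (n : ℝ) * (Real.log (2 * α) - Real.log β)
        = n * Real.log (2 * α) - n * Real.log β := by ring
    rw [hlogdiv, hr]
    linarith
  have hsk : s ≤ 2 * k + 2 := by omega
  have hskR : (s : ℝ) ≤ 2 * (k : ℝ) + 2 := by exact_mod_cast hsk
  have h2k : 2 * (k : ℝ) ≤ 4 * n / ε * Real.log (2 * α / β) := by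
    rw [div_mul_eq_mul_div, le_div_iff₀ hε0]
    nlinarith [hkb]
  linarith
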